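/- Let (Y^ε_t(x)) be solutions of dY = F_ε(Y)dt + dB with y F_ε(y) ≤ 0 for all y, coupled so that Y^ε_t(x) is nondecreasing in x, and satisfying the uniform bound sup_{x∈ℝ} E[|Y^ε_t(x)|²] ≤ C_t < ∞ with t ↦ C_t locally bounded on (0, ∞). Then for fixed 0 < t₀ < T the family of processes (Y^ε(r))_{r ∈ ℝ} restricted to [t₀, T] is tight in C([t₀,T]; ℝ): (i) for each t ∈ [t₀,T], lim_{A→∞} sup_{r} P(|Y^ε_t(r)| > A) = 0; and (ii) for every η > 0, lim_{δ→0} sup_r P( sup_{|t−s|≤δ, s,t ∈ [t₀,T]} |Y^ε_t(r) − Y^ε_s(r)| > η ) = 0. -/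

import Mathlib

open MeasureTheory ProbabilityTheory Filter
open scoped ENNReal NNReal

/-- A standard one-dimensional Brownian motion: starts at `0`, has continuous
paths, Gaussian increments, and independent increments. -/
def IsBrownianMotion {Ω : Type*} [MeasurableSpace Ω] (P : Measure Ω)
    (B : ℝ → Ω → ℝ) : Prop :=
  (∀ ω, B 0 ω = 0) ∧
  (∀ ω, Continuous fun t => B t ω) ∧
  (∀ t, Measurable (B t)) ∧
  (∀ s t : ℝ, 0 ≤ s → s ≤ t →
    P.map (fun ω => B t ω - B s ω) = gaussianReal 0 (t - s).toNNReal) ∧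
  (∀ (n : ℕ) (τ : ℕ → ℝ), Monotone τ → (∀ i, 0 ≤ τ i) →
    iIndepFun
      (fun i : Fin n => fun ω => B (τ (i + 1)) ω - B (τ i) ω) P)

section AuxLemmas
open Real

lemma ennreal_add_sq_le (a b : ℝ≥0∞) : (a + b)^2 ≤ 4 * a^2 + 4 * b^2 := by
  have h : a + b ≤ 2 * max a b := by
    rcases le_total a b with h | h
    · calc a + b ≤ b + b := by exact add_le_add_left h b
      _ = 2 * b := (two_mul b).symm
      _ ≤ 2 * max a b := by gcongr; exact le_max_right a b
    · calc a + b ≤ a + a := by exact add_le_add_right h a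
      _ = 2 * a := (two_mul a).symm
      _ ≤ 2 * max a b := by gcongr; exact le_max_left a b
  calc (a+b)^2 ≤ (2 * max a b)^2 := by gcongr
    _ = 4 * (max a b)^2 := by ring
    _ ≤ 4 * (a^2 + b^2) := by
        gcongr
        rcases le_total a b with h | h
        · rw [max_eq_right h]; exact le_add_self
        · rw [max_eq_left h]; exact le_self_add
    _ = 4 * a^2 + 4 * b^2 := by ring

lemma ennreal_sq_iSup {g : ℕ → ℝ≥0∞} (hg : Monotone g) :
    (⨆ n, g n)^2 = ⨆ n, (g n)^2 := by
  apply le_antisymm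
  · rw [pow_two, ENNReal.iSup_mul]
    refine iSup_le fun n => ?_
    rw [ENNReal.mul_iSup]
    refine iSup_le fun m => ?_
    calc g n * g m ≤ g (max n m) * g (max n m) :=
          mul_le_mul' (hg (le_max_left n m)) (hg (le_max_right n m))
      _ = g (max n m)^2 := (pow_two _).symm
      _ ≤ ⨆ k, (g k)^2 := le_iSup (fun k => (g k)^2) (max n m)
  · exact iSup_le fun n => by gcongr; exact le_iSup g n

lemma lintegral_sq_le {Ω : Type*} [MeasurableSpace Ω] (P : Measure Ω) [IsProbabilityMeasure P]
    {f : Ω → ℝ≥0∞} (hf : Measurable f) :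
    (∫⁻ ω, (f ω)^2 ∂P) ≤ (∫⁻ ω, (f ω)^4 ∂P) ^ ((1:ℝ)/2) := by
  have h := ENNReal.lintegral_mul_le_Lp_mul_Lq P Real.HolderConjugate.two_two
    (hf.pow_const 2).aemeasurable (aemeasurable_const (b := (1:ℝ≥0∞)))
  simp only [Pi.mul_apply, mul_one, ENNReal.one_rpow, lintegral_const, measure_univ,
    one_mul] at h
  calc (∫⁻ ω, (f ω)^2 ∂P) ≤ (∫⁻ ω, ((f ω)^2) ^ (2:ℝ) ∂P) ^ ((1:ℝ)/2) * 1 := by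
        simpa using h
    _ = (∫⁻ ω, (f ω)^4 ∂P) ^ ((1:ℝ)/2) := by
        rw [mul_one]
        congr 1
        refine lintegral_congr fun ω => ?_
        rw [← ENNReal.rpow_natCast (f ω) 2, ← ENNReal.rpow_mul,
          ← ENNReal.rpow_natCast (f ω) 4]
        norm_num

lemma lintegral_Lp_sum_le {Ω : Type*} [MeasurableSpace Ω] (P : Measure Ω)
    {f : ℕ → Ω → ℝ≥0∞} (hf : ∀ n, Measurable (f n)) (N : ℕ) :
    (∫⁻ ω, (∑ n ∈ Finset.range N, f n ω) ^ (2:ℝ) ∂P) ^ ((1:ℝ)/2) ≤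
      ∑ n ∈ Finset.range N, (∫⁻ ω, (f n ω) ^ (2:ℝ) ∂P) ^ ((1:ℝ)/2) := by
  induction N with
  | zero => simp [ENNReal.zero_rpow_of_pos]
  | succ N ih =>
      simp only [Finset.sum_range_succ]
      have h := ENNReal.lintegral_Lp_add_le (μ := P)
        (f := fun ω => ∑ n ∈ Finset.range N, f n ω) (g := f N)
        (Finset.measurable_sum _ fun n _ => hf n).aemeasurable (hf N).aemeasurable
        (by norm_num : (1:ℝ) ≤ 2)
      calc (∫⁻ ω, (∑ n ∈ Finset.range N, f n ω + f N ω) ^ (2:ℝ) ∂P) ^ ((1:ℝ)/2)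
          ≤ (∫⁻ ω, (∑ n ∈ Finset.range N, f n ω) ^ (2:ℝ) ∂P) ^ ((1:ℝ)/2)
            + (∫⁻ ω, (f N ω) ^ (2:ℝ) ∂P) ^ ((1:ℝ)/2) := h
        _ ≤ _ := by exact add_le_add_left ih _

lemma meas_nnnorm4 : Measurable fun x : ℝ => (‖x‖₊ : ℝ≥0∞)^4 := by fun_prop

noncomputable def kappa : ℝ≥0∞ := ∫⁻ x : ℝ, (‖x‖₊ : ℝ≥0∞)^4 ∂(gaussianReal 0 1)

lemma kappa_lt_top : kappa < ∞ := by
  rw [kappa, gaussianReal_of_var_ne_zero 0 one_ne_zero,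
    lintegral_withDensity_eq_lintegral_mul _ (measurable_gaussianPDF 0 1)
      meas_nnnorm4]
  have hint : Integrable (fun x : ℝ => x^4 * gaussianPDFReal 0 1 x) := by
    have h := (integrable_rpow_mul_exp_neg_mul_sq (b := 1/2) (by norm_num)
      (s := (4:ℝ)) (by norm_num)).const_mul ((Real.sqrt (2 * π))⁻¹)
    refine h.congr (Filter.Eventually.of_forall fun x => ?_)
    simp only [gaussianPDFReal]
    rw [show x ^ (4:ℝ) = x ^ (4:ℕ) by rw [← Real.rpow_natCast x 4]; norm_num]
    push_cast
    ring_nf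
  have heq : ∀ x : ℝ, ((gaussianPDF 0 1) * (fun x : ℝ => (‖x‖₊ : ℝ≥0∞)^4)) x
      = ENNReal.ofReal (x^4 * gaussianPDFReal 0 1 x) := by
    intro x
    have habs : |x|^4 = x^4 := by
      rw [← abs_pow]; exact abs_of_nonneg (by positivity)
    simp only [Pi.mul_apply, gaussianPDF]
    rw [← enorm_eq_nnnorm, Real.enorm_eq_ofReal_abs, ← ENNReal.ofReal_pow (abs_nonneg x),
      ← ENNReal.ofReal_mul (gaussianPDFReal_nonneg 0 1 x), habs, mul_comm]
  calc ∫⁻ x, ((gaussianPDF 0 1) * (fun x : ℝ => (‖x‖₊ : ℝ≥0∞)^4)) x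
      = ∫⁻ x, ENNReal.ofReal (x^4 * gaussianPDFReal 0 1 x) := lintegral_congr heq
    _ < ∞ := hint.lintegral_lt_top

lemma gauss_moment4_scaled {v : ℝ} (hv : 0 < v) :
    ∫⁻ x : ℝ, (‖x‖₊ : ℝ≥0∞)^4 ∂(gaussianReal 0 v.toNNReal)
      = ENNReal.ofReal (v^2) * kappa := by
  set c := Real.sqrt v with hc
  have hc0 : 0 ≤ c := Real.sqrt_nonneg v
  have hc2 : c^2 = v := Real.sq_sqrt hv.le
  have hmap : (gaussianReal 0 1).map (c * ·) = gaussianReal 0 v.toNNReal := by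
    rw [gaussianReal_map_const_mul c]
    congr 1
    · ring
    · ext
      simp [hc2, hv.le]
  rw [← hmap, lintegral_map meas_nnnorm4 (measurable_const_mul c)]
  have : ∀ z : ℝ, (‖c * z‖₊ : ℝ≥0∞)^4 = ENNReal.ofReal (v^2) * (‖z‖₊ : ℝ≥0∞)^4 := by
    intro z
    rw [nnnorm_mul, ENNReal.coe_mul, mul_pow]
    congr 1
    rw [← enorm_eq_nnnorm, Real.enorm_eq_ofReal_abs, abs_of_nonneg hc0, ← ENNReal.ofReal_pow hc0]
    congr 1
    rw [show (4:ℕ) = 2*2 by norm_num, pow_mul, hc2]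
  rw [lintegral_congr this, lintegral_const_mul _
    meas_nnnorm4]
  rfl

/-- One-sided crossing bound. -/
lemma crossing_aux {F : ℝ → ℝ} (hF : ∀ y > (0:ℝ), F y ≤ 0)
    {f g : ℝ → ℝ} (hf : Continuous f)
    {t₀ T : ℝ}
    (heq : ∀ s u, t₀ ≤ s → s ≤ u → u ≤ T →
      f u - f s = (∫ v in s..u, F (f v)) + (g u - g s))
    {m a : ℝ} (hm : ∀ v ∈ Set.Icc t₀ T, |g v - g t₀| ≤ m)
    (ha : f t₀ ≤ a) (ha0 : 0 ≤ a) :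
    ∀ u ∈ Set.Icc t₀ T, f u ≤ a + 2 * m := by
  intro u hu
  by_contra hcon
  push_neg at hcon
  set S : Set ℝ := {v | v ∈ Set.Icc t₀ u ∧ f v ≤ a} with hS
  have ht₀u : t₀ ≤ u := hu.1
  have hSne : S.Nonempty := ⟨t₀, ⟨le_refl _, ht₀u⟩, ha⟩
  have hScl : IsClosed S := by
    have : S = Set.Icc t₀ u ∩ f ⁻¹' (Set.Iic a) := by
      ext v; simp [hS, Set.mem_Icc, and_assoc]
    rw [this]
    exact isClosed_Icc.inter (IsClosed.preimage hf isClosed_Iic)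
  have hSbdd : BddAbove S := ⟨u, fun v hv => hv.1.2⟩
  set c := sSup S with hc
  have hcS : c ∈ S := hScl.csSup_mem hSne hSbdd
  have hcu : c ≤ u := hcS.1.2
  have htc : t₀ ≤ c := hcS.1.1
  have hkey : ∀ v, c < v → v ≤ u → 0 < f v := by
    intro v hv hvu
    by_contra hfv
    push_neg at hfv
    have : v ∈ S := ⟨⟨htc.trans hv.le, hvu⟩, hfv.trans ha0⟩
    exact absurd (le_csSup hSbdd this) (not_le.mpr hv)
  have heqcu := heq c u htc hcu hu.2
  have hint : (∫ v in c..u, F (f v)) ≤ 0 := by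
    rw [intervalIntegral.integral_of_le hcu]
    apply MeasureTheory.integral_nonpos_of_ae
    filter_upwards [MeasureTheory.self_mem_ae_restrict (measurableSet_Ioc : MeasurableSet (Set.Ioc c u))] with v hv
    exact hF _ (hkey v hv.1 hv.2)
  have hgu : |g u - g t₀| ≤ m := hm u hu
  have hgc : |g c - g t₀| ≤ m := hm c ⟨htc, hcu.trans hu.2⟩
  have : f u ≤ a + 2 * m := by
    have h1 : f u = f c + ((∫ v in c..u, F (f v)) + (g u - g c)) := by linarith [heqcu]
    have h2 : g u - g c ≤ 2 * m := by
      have := abs_le.mp hgu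
      have := abs_le.mp hgc
      linarith
    linarith [hcS.2]
  linarith

/-- Two-sided crossing bound. -/
lemma crossing_abs {F : ℝ → ℝ} (hFneg : ∀ y : ℝ, y * F y ≤ 0)
    {f g : ℝ → ℝ} (hf : Continuous f)
    {t₀ T : ℝ}
    (heq : ∀ s u, t₀ ≤ s → s ≤ u → u ≤ T →
      f u - f s = (∫ v in s..u, F (f v)) + (g u - g s))
    {m a : ℝ} (hm : ∀ v ∈ Set.Icc t₀ T, |g v - g t₀| ≤ m)
    (ha : |f t₀| ≤ a) :
    ∀ u ∈ Set.Icc t₀ T, |f u| ≤ a + 2 * m := by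
  have ha0 : 0 ≤ a := (abs_nonneg _).trans ha
  have hup : ∀ u ∈ Set.Icc t₀ T, f u ≤ a + 2 * m := by
    refine crossing_aux (fun y hy => ?_) hf heq hm ((le_abs_self _).trans ha) ha0
    nlinarith [hFneg y]
  have hlo : ∀ u ∈ Set.Icc t₀ T, -f u ≤ a + 2 * m := by
    have := crossing_aux (F := fun y => -F (-y)) (fun y hy => by
        show -F (-y) ≤ 0
        rcases mul_nonpos_iff.mp (hFneg (-y)) with ⟨h1, h2⟩ | ⟨h1, h2⟩ <;> linarith)
      (f := fun v => -f v) (g := fun v => -g v) hf.neg (t₀ := t₀) (T := T)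
      (fun s u hs hsu huT => by
        have h1 : (∫ v in s..u, -F (-(-f v))) = -(∫ v in s..u, F (f v)) := by
          simp [intervalIntegral.integral_neg]
        have := heq s u hs hsu huT
        simp only [neg_neg] at h1 ⊢
        rw [h1]; linarith)
      (m := m) (a := a)
      (fun v hv => by rw [show -g v - -g t₀ = -(g v - g t₀) by ring, abs_neg]; exact hm v hv)
      ((neg_le_abs _).trans ha) ha0
    simpa using this
  intro u hu
  exact abs_le.mpr ⟨by linarith [hlo u hu], hup u hu⟩

lemma exists_dominator {Ω : Type*} [MeasurableSpace Ω] (P : Measure Ω) [IsProbabilityMeasure P]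
    (B : ℝ → Ω → ℝ) (hB0 : ∀ ω, B 0 ω = 0) (hBc : ∀ ω, Continuous fun s => B s ω)
    (hBm : ∀ s, Measurable (B s))
    (hBg : ∀ s u : ℝ, 0 ≤ s → s ≤ u →
      P.map (fun ω => B u ω - B s ω) = gaussianReal 0 (u - s).toNNReal)
    {t : ℝ} (ht : 0 < t) :
    ∃ W : Ω → ℝ≥0∞, Measurable W ∧ (∫⁻ ω, (W ω)^2 ∂P) < ∞ ∧
      ∀ ω, ∀ u ∈ Set.Icc 0 t, ENNReal.ofReal |B u ω| ≤ W ω := by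
  classical
  set Δ : ℕ → ℕ → Ω → ℝ := fun n k ω => B ((k+1) * t / 2^n) ω - B (k * t / 2^n) ω with hΔ
  have hΔm : ∀ n k, Measurable (Δ n k) := fun n k => (hBm _).sub (hBm _)
  set φ : ℕ → ℕ → Ω → ℝ≥0∞ := fun n k ω => (‖Δ n k ω‖₊ : ℝ≥0∞) with hφ
  have hφm : ∀ n k, Measurable (φ n k) := fun n k => (hΔm n k).nnnorm.coe_nnreal_ennreal
  set ψ : ℕ → Ω → ℝ≥0∞ :=
    fun n ω => (∑ k ∈ Finset.range (2^n), (φ n k ω)^4) ^ ((1:ℝ)/4) with hψ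
  have hψm : ∀ n, Measurable (ψ n) := by
    intro n
    exact (Finset.measurable_sum _ fun k _ => (hφm n k).pow_const 4).pow_const _
  set S : ℕ → Ω → ℝ≥0∞ := fun N ω => ∑ n ∈ Finset.range N, ψ n ω with hS
  have hSm : ∀ N, Measurable (S N) := fun N => Finset.measurable_sum _ fun n _ => hψm n
  have hSmono : ∀ ω, Monotone fun N => S N ω := by
    intro ω M N hMN
    exact Finset.sum_le_sum_of_subset (Finset.range_subset_range.mpr hMN)
  refine ⟨fun ω => ⨆ N, S N ω, Measurable.iSup hSm, ?_, ?_⟩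
  · -- integral bound
    -- pointwise 4th power of ψ
    have hψ4 : ∀ n ω, (ψ n ω)^4 = ∑ k ∈ Finset.range (2^n), (φ n k ω)^4 := by
      intro n ω
      rw [hψ]
      rw [← ENNReal.rpow_natCast (_ ^ ((1:ℝ)/4)) 4, ← ENNReal.rpow_mul]
      norm_num
    -- increment moments
    have hmom : ∀ n k, k ∈ Finset.range (2^n) →
        ∫⁻ ω, (φ n k ω)^4 ∂P = ENNReal.ofReal ((t/2^n)^2) * kappa := by
      intro n k _
      have h0 : (0:ℝ) ≤ k * t / 2^n := by positivity
      have h1 : (k:ℝ) * t / 2^n ≤ ((k:ℝ)+1) * t / 2^n := by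
        gcongr <;> linarith [ht.le]
      have hlaw := hBg _ _ h0 h1
      have harith : ((k:ℝ)+1) * t / 2^n - k * t / 2^n = t / 2^n := by ring
      have : ∫⁻ ω, (φ n k ω)^4 ∂P
          = ∫⁻ x, (‖x‖₊ : ℝ≥0∞)^4 ∂(P.map (Δ n k)) := by
        rw [lintegral_map meas_nnnorm4 (hΔm n k)]
      rw [this, hΔ]
      simp only []
      rw [hlaw, harith, gauss_moment4_scaled (by positivity)]
    have hψ4int : ∀ n, ∫⁻ ω, (ψ n ω)^4 ∂P
        = ENNReal.ofReal (t^2) * (ENNReal.ofReal (1/2))^n * kappa := by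
      intro n
      have : ∫⁻ ω, (ψ n ω)^4 ∂P = ∑ k ∈ Finset.range (2^n), ∫⁻ ω, (φ n k ω)^4 ∂P := by
        simp_rw [hψ4]
        exact lintegral_finset_sum _ fun k _ => (hφm n k).pow_const 4
      rw [this, Finset.sum_congr rfl (hmom _), Finset.sum_const, Finset.card_range,
        nsmul_eq_mul]
      have h2n : ((2^n : ℕ) : ℝ≥0∞) = ENNReal.ofReal ((2:ℝ)^n) := by
        rw [ENNReal.ofReal_pow (by norm_num : (0:ℝ) ≤ 2)]
        push_cast
        norm_num
      rw [h2n, ← mul_assoc, ← ENNReal.ofReal_mul (by positivity)]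
      rw [show (2:ℝ)^n * (t/2^n)^2 = t^2 * (1/2)^n by rw [div_pow, one_div_pow]; field_simp]
      rw [ENNReal.ofReal_mul (by positivity : (0:ℝ) ≤ t^2),
        ENNReal.ofReal_pow (p := (1:ℝ)/2) (by norm_num)]
    -- L2 norms of ψ n
    set q : ℝ≥0∞ := (ENNReal.ofReal (1/2)) ^ ((1:ℝ)/4) with hq
    set c₀ : ℝ≥0∞ := (ENNReal.ofReal (t^2) * kappa) ^ ((1:ℝ)/4) with hc₀
    have hq1 : q < 1 := by
      rw [hq]
      apply ENNReal.rpow_lt_one (by simp [ENNReal.ofReal_lt_one]) (by norm_num)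
    have hc₀top : c₀ ≠ ∞ := by
      rw [hc₀]
      apply ENNReal.rpow_ne_top_of_nonneg (by norm_num)
      exact (ENNReal.mul_lt_top ENNReal.ofReal_lt_top kappa_lt_top).ne
    have han : ∀ n, (∫⁻ ω, (ψ n ω) ^ (2:ℝ) ∂P) ^ ((1:ℝ)/2) ≤ c₀ * q^n := by
      intro n
      have h2 : ∫⁻ ω, (ψ n ω) ^ (2:ℝ) ∂P = ∫⁻ ω, (ψ n ω) ^ (2:ℕ) ∂P := by
        refine lintegral_congr fun ω => ?_
        rw [← ENNReal.rpow_natCast (ψ n ω) 2]; norm_num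
      rw [h2]
      have h3 := lintegral_sq_le P (hψm n)
      have h4 : (∫⁻ ω, (ψ n ω)^4 ∂P) ^ ((1:ℝ)/2)
          = (ENNReal.ofReal (t^2) * (ENNReal.ofReal (1/2))^n * kappa) ^ ((1:ℝ)/2) := by
        rw [hψ4int n]
      have hqpow : ((ENNReal.ofReal (1/2))^n) ^ ((1:ℝ)/4)
          = q^n := by
        rw [hq, ← ENNReal.rpow_natCast (ENNReal.ofReal (1/2)) n, ← ENNReal.rpow_mul,
          ← ENNReal.rpow_natCast (ENNReal.ofReal (1/2) ^ ((1:ℝ)/4)) n,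
          ← ENNReal.rpow_mul]
        congr 1
        ring
      calc (∫⁻ ω, (ψ n ω) ^ (2:ℕ) ∂P) ^ ((1:ℝ)/2)
          ≤ ((∫⁻ ω, (ψ n ω)^4 ∂P) ^ ((1:ℝ)/2)) ^ ((1:ℝ)/2) := by
            gcongr
        _ = (∫⁻ ω, (ψ n ω)^4 ∂P) ^ ((1:ℝ)/4) := by
            rw [← ENNReal.rpow_mul]
            try norm_num
        _ = ((ENNReal.ofReal (t^2) * kappa) * (ENNReal.ofReal (1/2))^n) ^ ((1:ℝ)/4) := by
            rw [hψ4int n]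
            congr 1
            ring
        _ = c₀ * q^n := by
            rw [ENNReal.mul_rpow_of_nonneg _ _ (by norm_num : (0:ℝ) ≤ 1/4), hc₀, hqpow]
    set A : ℝ≥0∞ := c₀ * (1 - q)⁻¹ with hA
    have hAtop : A ≠ ∞ := by
      rw [hA]
      apply ENNReal.mul_ne_top hc₀top
      simp only [ne_eq, ENNReal.inv_eq_top]
      intro hzero
      rw [tsub_eq_zero_iff_le] at hzero
      exact absurd hzero (not_le.mpr hq1)
    have hSN : ∀ N, ∫⁻ ω, (S N ω)^2 ∂P ≤ A^2 := by
      intro N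
      have h5 : (∫⁻ ω, (S N ω) ^ (2:ℝ) ∂P) ^ ((1:ℝ)/2) ≤ A := by
        calc (∫⁻ ω, (S N ω) ^ (2:ℝ) ∂P) ^ ((1:ℝ)/2)
            ≤ ∑ n ∈ Finset.range N, (∫⁻ ω, (ψ n ω) ^ (2:ℝ) ∂P) ^ ((1:ℝ)/2) :=
              lintegral_Lp_sum_le P hψm N
          _ ≤ ∑ n ∈ Finset.range N, c₀ * q^n := Finset.sum_le_sum fun n _ => han n
          _ = c₀ * ∑ n ∈ Finset.range N, q^n := by rw [Finset.mul_sum]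
          _ ≤ c₀ * ∑' n, q^n := by
              gcongr
              exact ENNReal.sum_le_tsum _
          _ = A := by rw [ENNReal.tsum_geometric, hA]
      have h6 : ∫⁻ ω, (S N ω)^2 ∂P = ∫⁻ ω, (S N ω) ^ (2:ℝ) ∂P := by
        refine lintegral_congr fun ω => ?_
        rw [← ENNReal.rpow_natCast (S N ω) 2]; norm_num
      rw [h6]
      calc ∫⁻ ω, (S N ω) ^ (2:ℝ) ∂P
          = ((∫⁻ ω, (S N ω) ^ (2:ℝ) ∂P) ^ ((1:ℝ)/2)) ^ (2:ℕ) := by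
            rw [← ENNReal.rpow_natCast (_ ^ ((1:ℝ)/2)) 2, ← ENNReal.rpow_mul]
            norm_num
        _ ≤ A^2 := by gcongr
    have hWint : ∫⁻ ω, (⨆ N, S N ω)^2 ∂P = ⨆ N, ∫⁻ ω, (S N ω)^2 ∂P := by
      have : ∀ ω, (⨆ N, S N ω)^2 = ⨆ N, (S N ω)^2 :=
        fun ω => ennreal_sq_iSup (hSmono ω)
      rw [lintegral_congr this]
      exact lintegral_iSup (fun N => (hSm N).pow_const 2)
        (fun M N hMN ω => by gcongr; exacts [hSmono ω hMN])
    rw [hWint]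
    exact lt_of_le_of_lt (iSup_le hSN) (lt_of_le_of_lt le_rfl
      (ENNReal.pow_lt_top (lt_of_le_of_ne le_top hAtop)))
  · -- pathwise bound
    intro ω u hu
    have hφψ : ∀ n k, k < 2^n → φ n k ω ≤ ψ n ω := by
      intro n k hk
      have h1 : (φ n k ω)^(4:ℕ) ≤ ∑ j ∈ Finset.range (2^n), (φ n j ω)^4 :=
        Finset.single_le_sum (f := fun j => (φ n j ω)^4)
          (fun j _ => zero_le) (Finset.mem_range.mpr hk)
      have := ENNReal.rpow_le_rpow (z := (1:ℝ)/4) h1 (by norm_num)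
      calc φ n k ω = ((φ n k ω)^(4:ℕ)) ^ ((1:ℝ)/4) := by
            rw [← ENNReal.rpow_natCast (φ n k ω) 4, ← ENNReal.rpow_mul]
            norm_num
        _ ≤ _ := this
    rcases eq_or_lt_of_le hu.2 with heq | hlt
    · -- u = t
      have : ENNReal.ofReal |B u ω| = φ 0 0 ω := by
        rw [hφ, hΔ]
        simp only []
        rw [show ((0:ℕ)+1) * t / 2^0 = t by norm_num, show (0:ℕ) * t / 2^0 = 0 by norm_num,
          hB0, sub_zero, heq, ← enorm_eq_nnnorm, Real.enorm_eq_ofReal_abs]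
      rw [this]
      calc φ 0 0 ω ≤ ψ 0 ω := hφψ 0 0 (by norm_num)
        _ ≤ S 1 ω := by rw [hS]; simp
        _ ≤ ⨆ N, S N ω := le_iSup (fun N => S N ω) 1
    · -- u < t
      set x : ℝ := u / t with hx
      have hx0 : 0 ≤ x := div_nonneg hu.1 ht.le
      have hx1 : x < 1 := (div_lt_one ht).mpr hlt
      set v : ℕ → ℝ := fun N => (⌊2^N * x⌋₊ : ℝ) * t / 2^N with hv
      have hkey : ∀ N, ENNReal.ofReal |B (v N) ω| ≤ S (N+1) ω := by
        intro N
        induction N with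
        | zero =>
            have hv0 : v 0 = 0 := by
              rw [hv]
              simp only [pow_zero, one_mul]
              rw [Nat.floor_eq_zero.mpr hx1]
              simp
            rw [hv0, hB0, abs_zero, ENNReal.ofReal_zero]
            exact zero_le
        | succ N ih =>
            set i := ⌊(2:ℝ)^N * x⌋₊ with hi
            set j := ⌊(2:ℝ)^(N+1) * x⌋₊ with hj
            have hifl : (i:ℝ) ≤ 2^N * x := Nat.floor_le (by positivity)
            have hiub : 2^N * x < i + 1 := Nat.lt_floor_add_one _
            have h2i : 2 * i ≤ j := by
              apply Nat.le_floor
              push_cast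
              calc ((2:ℝ) * i) ≤ 2 * (2^N * x) := by linarith
                _ = 2^(N+1) * x := by ring
            have hj2i : j ≤ 2 * i + 1 := by
              have : (j:ℝ) ≤ 2^(N+1)*x := Nat.floor_le (by positivity)
              have h2 : (2:ℝ)^(N+1)*x < 2*i+2 := by
                calc (2:ℝ)^(N+1)*x = 2*(2^N*x) := by ring
                  _ < 2*(i+1) := by linarith
                  _ = 2*i+2 := by ring
              have := this.trans_lt h2
              exact_mod_cast Nat.lt_add_one_iff.mp (by exact_mod_cast this)
            have hiN : i < 2^N := by
              have h' : (i:ℝ) < (2:ℝ)^N := by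
                nlinarith [pow_pos (show (0:ℝ) < 2 by norm_num) N]
              have hcast : ((2^N : ℕ) : ℝ) = (2:ℝ)^N := by push_cast; ring
              rw [← hcast] at h'
              exact_mod_cast h'
            rcases Nat.eq_or_lt_of_le h2i with hcase | hcase
            · -- j = 2i, v(N+1) = v N
              have hveq : v (N+1) = v N := by
                rw [hv]
                simp only [← hj, ← hi, ← hcase]
                push_cast
                field_simp
                ring
              rw [hveq]
              exact ih.trans (hSmono ω (by norm_num))
            · -- j = 2i + 1
              have hjeq : j = 2*i+1 := le_antisymm hj2i hcase
              have hv1 : v (N+1) = ((2*i+1 : ℕ) : ℝ) * t / 2^(N+1) := by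
                rw [hv]
                simp only [← hj, hjeq]
              have hv0 : v N = ((2*i : ℕ) : ℝ) * t / 2^(N+1) := by
                rw [hv]
                simp only [← hi]
                push_cast
                field_simp
                ring
              have hstep : B (v (N+1)) ω = B (v N) ω + Δ (N+1) (2*i) ω := by
                rw [hΔ]
                simp only []
                rw [hv1, hv0]
                have e1 : ((2*i+1:ℕ):ℝ) = ((2*i:ℕ):ℝ) + 1 := by push_cast; ring
                rw [e1]
                ring
              rw [hstep]
              calc ENNReal.ofReal |B (v N) ω + Δ (N+1) (2*i) ω|
                  ≤ ENNReal.ofReal (|B (v N) ω| + |Δ (N+1) (2*i) ω|) :=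
                    ENNReal.ofReal_le_ofReal (abs_add_le _ _)
                _ ≤ ENNReal.ofReal |B (v N) ω| + ENNReal.ofReal |Δ (N+1) (2*i) ω| :=
                    ENNReal.ofReal_add_le
                _ ≤ S (N+1) ω + ψ (N+1) ω := by
                    apply add_le_add ih
                    rw [← Real.enorm_eq_ofReal_abs]
                    refine hφψ (N+1) (2*i) ?_
                    have h2 : 2*i < 2*2^N := by omega
                    calc 2*i < 2*2^N := h2
                      _ = 2^(N+1) := by rw [pow_succ]; ring
                _ = S (N+2) ω :=
                    (Finset.sum_range_succ (fun n => ψ n ω) (N+1)).symm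
      have htend : Filter.Tendsto v Filter.atTop (nhds u) := by
        have hux : u = x * t := by rw [hx]; field_simp
        have hb : ∀ N, dist (v N) u ≤ t * (1/2)^N := by
          intro N
          have hfl : ((⌊(2:ℝ)^N * x⌋₊ : ℝ)) ≤ 2^N * x := Nat.floor_le (by positivity)
          have hfu : 2^N * x < (⌊(2:ℝ)^N * x⌋₊ : ℝ) + 1 := Nat.lt_floor_add_one _
          have hdd : |((⌊(2:ℝ)^N * x⌋₊ : ℝ)) - 2^N * x| ≤ 1 := by
            rw [abs_le]; constructor <;> linarith
          have hform : v N - u = (((⌊(2:ℝ)^N * x⌋₊ : ℝ)) - 2^N * x) * (t / 2^N) := by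
            rw [hv, hux]
            field_simp
          rw [Real.dist_eq, hform, abs_mul,
            abs_of_nonneg (by positivity : (0:ℝ) ≤ t / 2^N)]
          calc |((⌊(2:ℝ)^N * x⌋₊ : ℝ)) - 2^N * x| * (t / 2^N)
              ≤ 1 * (t / 2^N) := mul_le_mul_of_nonneg_right hdd (by positivity)
            _ = t * (1/2)^N := by rw [one_mul]; rw [div_pow, one_pow]; ring
        have hlim : Filter.Tendsto (fun N : ℕ => t * (1/2)^N) Filter.atTop (nhds 0) := by
          rw [show (0:ℝ) = t * 0 by ring]
          exact (tendsto_pow_atTop_nhds_zero_of_lt_one (by norm_num) (by norm_num)).const_mul t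
        rw [tendsto_iff_dist_tendsto_zero]
        exact squeeze_zero (fun N => dist_nonneg) hb hlim
      have hcont : Filter.Tendsto (fun N => ENNReal.ofReal |B (v N) ω|)
          Filter.atTop (nhds (ENNReal.ofReal |B u ω|)) := by
        exact ((ENNReal.continuous_ofReal.comp
          (continuous_abs.comp (hBc ω))).tendsto u).comp htend
      show ENNReal.ofReal |B u ω| ≤ ⨆ N, S N ω
      refine le_of_tendsto hcont (Filter.Eventually.of_forall fun N => ?_)
      exact (hkey N).trans (le_iSup (fun N => S N ω) (N+1))

section Main
variable {Ω : Type*} [MeasurableSpace Ω]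
  (P : Measure Ω) [IsProbabilityMeasure P]
  (B : ℝ → Ω → ℝ)
  (F : ℝ → ℝ) (Y : ℝ → ℝ → Ω → ℝ)

/-- The increments relation derived from the SDE. -/
lemma heq_of_sde (hFcont : Continuous F)
    (hYcont : ∀ r ω, Continuous fun t => Y r t ω)
    (hSDE : ∀ r : ℝ, ∀ ω, ∀ t ≥ (0:ℝ),
      Y r t ω = r + (∫ u in (0:ℝ)..t, F (Y r u ω)) + B t ω)
    (r : ℝ) (ω : Ω) :
    ∀ s u : ℝ, 0 ≤ s → s ≤ u →
      Y r u ω - Y r s ω = (∫ v in s..u, F (Y r v ω)) + (B u ω - B s ω) := by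
  intro s u hs hsu
  have hiF : ∀ a b : ℝ, IntervalIntegrable (fun v => F (Y r v ω)) volume a b :=
    fun a b => (hFcont.comp (hYcont r ω)).intervalIntegrable a b
  have h1 := hSDE r ω s hs
  have h2 := hSDE r ω u (hs.trans hsu)
  have h3 : (∫ v in (0:ℝ)..s, F (Y r v ω)) + (∫ v in s..u, F (Y r v ω))
      = ∫ v in (0:ℝ)..u, F (Y r v ω) :=
    intervalIntegral.integral_add_adjacent_intervals (hiF 0 s) (hiF s u)
  rw [h1, h2, ← h3]
  ring

lemma sq_integrable
    (hB0 : ∀ ω, B 0 ω = 0) (hBc : ∀ ω, Continuous fun s => B s ω)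
    (hBm : ∀ s, Measurable (B s))
    (hBg : ∀ s u : ℝ, 0 ≤ s → s ≤ u →
      P.map (fun ω => B u ω - B s ω) = gaussianReal 0 (u - s).toNNReal)
    (hFcont : Continuous F) (hFneg : ∀ y : ℝ, y * F y ≤ 0)
    (hYcont : ∀ r ω, Continuous fun t => Y r t ω)
    (hYmeas : ∀ r t, Measurable (Y r t))
    (hSDE : ∀ r : ℝ, ∀ ω, ∀ t ≥ (0:ℝ),
      Y r t ω = r + (∫ u in (0:ℝ)..t, F (Y r u ω)) + B t ω)
    {t : ℝ} (ht : 0 < t) (r : ℝ) :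
    Integrable (fun ω => |Y r t ω| ^ 2) P := by
  obtain ⟨W, hWm, hWint, hWbd⟩ := exists_dominator P B hB0 hBc hBm hBg ht
  have hY0 : ∀ ω, Y r 0 ω = r := by
    intro ω
    have := hSDE r ω 0 le_rfl
    simpa [hB0 ω] using this
  -- pathwise bound
  have hpath : ∀ ω, ENNReal.ofReal |Y r t ω| ≤ ENNReal.ofReal |r| + 2 * W ω := by
    intro ω
    -- attained max of |B| on [0,t]
    obtain ⟨u₀, hu₀, hmax⟩ := isCompact_Icc.exists_isMaxOn (⟨0, le_refl 0, ht.le⟩ :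
        (Set.Icc (0:ℝ) t).Nonempty) (continuous_abs.comp (hBc ω)).continuousOn
    have hmabs : ∀ v ∈ Set.Icc (0:ℝ) t, |B v ω - B 0 ω| ≤ |B u₀ ω| := by
      intro v hv
      rw [hB0 ω, sub_zero]
      exact hmax hv
    have hYb : |Y r t ω| ≤ |r| + 2 * |B u₀ ω| :=
      crossing_abs hFneg (hYcont r ω)
        (fun s u hs hsu _ => heq_of_sde B F Y hFcont hYcont hSDE r ω s u hs hsu)
        hmabs (le_of_eq (by rw [hY0 ω])) t ⟨ht.le, le_refl t⟩
    calc ENNReal.ofReal |Y r t ω| ≤ ENNReal.ofReal (|r| + 2 * |B u₀ ω|) :=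
          ENNReal.ofReal_le_ofReal hYb
      _ ≤ ENNReal.ofReal |r| + ENNReal.ofReal (2 * |B u₀ ω|) := ENNReal.ofReal_add_le
      _ = ENNReal.ofReal |r| + 2 * ENNReal.ofReal |B u₀ ω| := by
          rw [ENNReal.ofReal_mul (by norm_num : (0:ℝ) ≤ 2)]
          norm_num
      _ ≤ ENNReal.ofReal |r| + 2 * W ω := by
          gcongr
          exact hWbd ω u₀ hu₀
  constructor
  · exact ((hYmeas r t).abs.pow_const 2).aestronglyMeasurable
  · rw [hasFiniteIntegral_iff_norm]
    have hpt : ∀ ω, ENNReal.ofReal ‖|Y r t ω| ^ 2‖ ≤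
        4 * (ENNReal.ofReal |r|)^2 + 4 * (2 * W ω)^2 := by
      intro ω
      have h1 : ENNReal.ofReal ‖|Y r t ω| ^ 2‖ = (ENNReal.ofReal |Y r t ω|)^2 := by
        rw [Real.norm_eq_abs, abs_of_nonneg (by positivity : (0:ℝ) ≤ |Y r t ω|^2),
          ENNReal.ofReal_pow (abs_nonneg _)]
      rw [h1]
      calc (ENNReal.ofReal |Y r t ω|)^2 ≤ (ENNReal.ofReal |r| + 2 * W ω)^2 := by
            gcongr
            exact hpath ω
        _ ≤ 4 * (ENNReal.ofReal |r|)^2 + 4 * (2 * W ω)^2 := ennreal_add_sq_le _ _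
    calc ∫⁻ ω, ENNReal.ofReal ‖|Y r t ω| ^ 2‖ ∂P
        ≤ ∫⁻ ω, (4 * (ENNReal.ofReal |r|)^2 + 4 * (2 * W ω)^2) ∂P :=
          lintegral_mono hpt
      _ = 4 * (ENNReal.ofReal |r|)^2 + 16 * ∫⁻ ω, (W ω)^2 ∂P := by
          rw [lintegral_add_left (by fun_prop), lintegral_const]
          simp only [measure_univ, mul_one]
          congr 1
          have heq16 : ∀ ω, 4 * (2 * W ω)^2 = 16 * (W ω)^2 := fun ω => by ring
          rw [lintegral_congr heq16, lintegral_const_mul _ (hWm.pow_const 2)]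
      _ < ∞ := by
          apply ENNReal.add_lt_top.mpr
          constructor
          · exact ENNReal.mul_lt_top (by norm_num) (ENNReal.pow_lt_top ENNReal.ofReal_lt_top)
          · exact ENNReal.mul_lt_top (by norm_num) hWint

lemma cheb (t : ℝ) (r : ℝ) (hint : Integrable (fun ω => |Y r t ω| ^ 2) P)
    (hYmeas : ∀ r t, Measurable (Y r t))
    {c : ℝ} (hc : (∫ ω, |Y r t ω| ^ 2 ∂P) ≤ c) {A : ℝ} (hA : 0 < A) :
    (P {ω | A < |Y r t ω|}).toReal ≤ c / A^2 := by
  have hc0 : 0 ≤ c := le_trans (integral_nonneg fun ω => by positivity) hc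
  have hsub : {ω | A < |Y r t ω|} ⊆
      {ω | ENNReal.ofReal (A^2) ≤ ENNReal.ofReal (|Y r t ω|^2)} := by
    intro ω hω
    simp only [Set.mem_setOf_eq] at hω ⊢
    apply ENNReal.ofReal_le_ofReal
    nlinarith [abs_nonneg (Y r t ω)]
  have hmark := mul_meas_ge_le_lintegral₀ (μ := P)
    (f := fun ω => ENNReal.ofReal (|Y r t ω|^2))
    (((hYmeas r t).abs.pow_const 2).ennreal_ofReal).aemeasurable (ENNReal.ofReal (A^2))
  have hlint : ∫⁻ ω, ENNReal.ofReal (|Y r t ω|^2) ∂P = ENNReal.ofReal (∫ ω, |Y r t ω|^2 ∂P) :=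
    (ofReal_integral_eq_lintegral_ofReal hint
      (Filter.Eventually.of_forall fun ω => by positivity)).symm
  have hchain : ENNReal.ofReal (A^2) * P {ω | A < |Y r t ω|} ≤ ENNReal.ofReal c := by
    calc ENNReal.ofReal (A^2) * P {ω | A < |Y r t ω|}
        ≤ ENNReal.ofReal (A^2) * P {ω | ENNReal.ofReal (A^2) ≤ ENNReal.ofReal (|Y r t ω|^2)} := by
          exact mul_le_mul_right (measure_mono hsub) _
      _ ≤ ∫⁻ ω, ENNReal.ofReal (|Y r t ω|^2) ∂P := hmark
      _ = ENNReal.ofReal (∫ ω, |Y r t ω|^2 ∂P) := hlint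
      _ ≤ ENNReal.ofReal c := ENNReal.ofReal_le_ofReal hc
  have hA2 : ENNReal.ofReal (A^2) ≠ 0 := by
    simp only [ne_eq, ENNReal.ofReal_eq_zero, not_le]
    positivity
  have hP : P {ω | A < |Y r t ω|} ≤ ENNReal.ofReal c / ENNReal.ofReal (A^2) := by
    rw [ENNReal.le_div_iff_mul_le (Or.inl hA2) (Or.inl ENNReal.ofReal_ne_top)]
    rw [mul_comm]
    exact hchain
  have : P {ω | A < |Y r t ω|} ≤ ENNReal.ofReal (c / A^2) := by
    rw [ENNReal.ofReal_div_of_pos (by positivity)]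
    exact hP
  calc (P {ω | A < |Y r t ω|}).toReal ≤ (ENNReal.ofReal (c / A^2)).toReal :=
        ENNReal.toReal_mono ENNReal.ofReal_ne_top this
    _ = c / A^2 := ENNReal.toReal_ofReal (by positivity)

end Main

lemma div_sq_lt {c e A : ℝ} (hc : 0 ≤ c) (he : 0 < e) (hA : Real.sqrt (c/e) + 1 ≤ A) :
    c / A^2 < e := by
  have hs := Real.sqrt_nonneg (c/e)
  have hA0 : 0 < A := by linarith
  have h1 : Real.sqrt (c/e)^2 = c/e := Real.sq_sqrt (by positivity)
  rw [div_lt_iff₀ (by positivity)]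
  have h2 : (Real.sqrt (c/e) + 1)^2 ≤ A^2 := by nlinarith
  have h3 : e * (Real.sqrt (c/e) + 1)^2 ≤ e * A^2 := by nlinarith
  have h4 : e * (Real.sqrt (c/e) + 1)^2 = c + e * (2*Real.sqrt (c/e) + 1) := by
    have : e * (Real.sqrt (c/e)^2) = c := by rw [h1]; field_simp
    nlinarith [this]
  nlinarith

lemma rat_approx_bound {g : ℝ → ℝ} (hg : Continuous g) {a b M : ℝ}
    (hq : ∀ q : ℚ, (q:ℝ) ∈ Set.Icc a b → g q ≤ M) (h0 : g a ≤ M) :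
    ∀ v ∈ Set.Icc a b, g v ≤ M := by
  intro v hv
  rcases eq_or_lt_of_le hv.1 with heq | hlt
  · rw [← heq]; exact h0
  by_contra hgt
  push_neg at hgt
  have hopen : IsOpen {w : ℝ | M < g w} := isOpen_lt continuous_const hg
  obtain ⟨ε, hε, hball⟩ := Metric.isOpen_iff.mp hopen v hgt
  have hlt2 : max a (v - ε) < v := by
    rw [max_lt_iff]
    constructor
    · exact hlt
    · linarith
  obtain ⟨q, hq1, hq2⟩ := exists_rat_btwn hlt2
  have hqmem : (q:ℝ) ∈ Set.Icc a b := by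
    constructor
    · exact le_of_lt (lt_of_le_of_lt (le_max_left a _) hq1)
    · exact le_of_lt (lt_of_lt_of_le hq2 hv.2)
  have hqball : (q:ℝ) ∈ Metric.ball v ε := by
    rw [Metric.mem_ball, Real.dist_eq, abs_lt]
    have := lt_of_le_of_lt (le_max_right a (v - ε)) hq1
    constructor <;> linarith
  exact absurd (hq q hqmem) (not_le.mpr (hball hqball))

end AuxLemmas

set_option maxHeartbeats 1000000 in
/-- Aldous-type tightness on `C([t₀,T];ℝ)`, uniformly in the
initial condition, for solutions of `dY = F(Y)dt + dB` with inward drift. -/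
theorem stmt_19 {Ω : Type*} [MeasurableSpace Ω]
    (P : Measure Ω) [IsProbabilityMeasure P]
    (B : ℝ → Ω → ℝ) (hB : IsBrownianMotion P B)
    (F : ℝ → ℝ) (hFcont : Continuous F) (hFneg : ∀ y : ℝ, y * F y ≤ 0)
    (Y : ℝ → ℝ → Ω → ℝ)  -- initial condition, time, sample point
    (hYcont : ∀ r ω, Continuous fun t => Y r t ω)
    (hYmeas : ∀ r t, Measurable (Y r t))
    (hSDE : ∀ r : ℝ, ∀ ω, ∀ t ≥ (0:ℝ),
      Y r t ω = r + (∫ u in (0:ℝ)..t, F (Y r u ω)) + B t ω)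
    (hmono : ∀ r r' : ℝ, r ≤ r' → ∀ᵐ ω ∂P, ∀ t ≥ (0:ℝ), Y r t ω ≤ Y r' t ω)
    (Cb : ℝ → ℝ)
    (hCb : ∀ t > (0:ℝ), ∀ r : ℝ, (∫ ω, |Y r t ω| ^ 2 ∂P) ≤ Cb t)
    (hCloc : ∀ K : Set ℝ, IsCompact K → K ⊆ Set.Ioi 0 → BddAbove (Cb '' K))
    (t₀ T : ℝ) (ht₀ : 0 < t₀) (hT : t₀ < T) :
    (∀ t ∈ Set.Icc t₀ T, ∀ η > (0:ℝ), ∃ A₀ : ℝ, ∀ A ≥ A₀, ∀ r : ℝ,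
      (P {ω | A < |Y r t ω|}).toReal < η) ∧
    (∀ η > (0:ℝ), ∀ η' > (0:ℝ), ∃ δ > (0:ℝ), ∀ r : ℝ,
      (P {ω | ∃ s ∈ Set.Icc t₀ T, ∃ u ∈ Set.Icc t₀ T,
        |u - s| ≤ δ ∧ η < |Y r u ω - Y r s ω|}).toReal < η') := by
  obtain ⟨hB0, hBc, hBm, hBg, _⟩ := hB
  constructor
  · -- Part (i)
    intro t htmem η hη
    have ht : 0 < t := lt_of_lt_of_le ht₀ htmem.1
    have hc0 : 0 ≤ Cb t := le_trans (integral_nonneg fun ω => by positivity) (hCb t ht 0)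
    refine ⟨Real.sqrt (Cb t / η) + 1, fun A hA r => ?_⟩
    have hA0 : 0 < A := lt_of_lt_of_le (by positivity) hA
    have hint := sq_integrable P B F Y hB0 hBc hBm hBg hFcont hFneg hYcont hYmeas hSDE ht r
    exact lt_of_le_of_lt (cheb P Y t r hint hYmeas (hCb t ht r) hA0)
      (div_sq_lt hc0 hη hA)
  · -- Part (ii)
    intro η hη η' hη'
    have ht₀T : t₀ ≤ T := hT.le
    have hc0 : 0 ≤ Cb t₀ := le_trans (integral_nonneg fun ω => by positivity) (hCb t₀ ht₀ 0)
    have he3 : 0 < η'/3 := by linarith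
    -- K₁ via Chebyshev at t₀
    set K₁ : ℝ := Real.sqrt (Cb t₀ / (η'/3)) + 1 with hK₁
    have hK₁pos : 0 < K₁ := by positivity
    -- E2 events
    set E2 : ℕ → Set Ω := fun n => ⋃ (q : ℚ) (_ : (q:ℝ) ∈ Set.Icc t₀ T),
      {ω | (n:ℝ) ≤ |B q ω - B t₀ ω|} with hE2def
    have hE2m : ∀ n, MeasurableSet (E2 n) := by
      intro n
      refine MeasurableSet.iUnion fun q => MeasurableSet.iUnion fun _ => ?_
      exact measurableSet_le measurable_const ((hBm q).sub (hBm t₀)).abs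
    have hE2anti : Antitone E2 := by
      intro n m hnm
      refine Set.iUnion₂_subset fun q hq => ?_
      refine Set.subset_iUnion₂_of_subset q hq fun ω hω => ?_
      simp only [Set.mem_setOf_eq] at hω ⊢
      have : (n:ℝ) ≤ (m:ℝ) := by exact_mod_cast hnm
      linarith
    have hE2empty : ⋂ n, E2 n = ∅ := by
      rw [Set.eq_empty_iff_forall_notMem]
      intro ω hω
      obtain ⟨u₀, hu₀, hmax⟩ := isCompact_Icc.exists_isMaxOn
        (⟨t₀, le_refl t₀, ht₀T⟩ : (Set.Icc t₀ T).Nonempty)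
        (continuous_abs.comp ((hBc ω).sub continuous_const)).continuousOn
      set M := |B u₀ ω - B t₀ ω| with hM
      have hωn := Set.mem_iInter.mp hω (⌊M⌋₊ + 1)
      rw [hE2def] at hωn
      simp only [Set.mem_iUnion, Set.mem_setOf_eq] at hωn
      obtain ⟨q, hq, hqB⟩ := hωn
      have h1 : |B q ω - B t₀ ω| ≤ M := hmax hq
      have h2 : M < (⌊M⌋₊ + 1 : ℕ) := by
        push_cast
        exact Nat.lt_floor_add_one M
      linarith
    have hE2lim : Tendsto (fun n => P (E2 n)) atTop (nhds 0) := by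
      have := tendsto_measure_iInter_atTop (μ := P)
        (fun n => (hE2m n).nullMeasurableSet) hE2anti ⟨0, measure_ne_top P _⟩
      rw [hE2empty] at this
      simp only [measure_empty] at this
      exact this
    obtain ⟨n₂, hn₂⟩ := (hE2lim.eventually_lt_const
      (by simp [ENNReal.ofReal_pos]; linarith : (0:ℝ≥0∞) < ENNReal.ofReal (η'/3))).exists
    set K₂ : ℝ := (n₂ : ℝ) with hK₂
    have hK₂0 : 0 ≤ K₂ := Nat.cast_nonneg n₂
    -- E3 events
    set E3 : ℕ → Set Ω := fun n => ⋃ (p : ℚ) (q : ℚ) (_ : (p:ℝ) ∈ Set.Icc t₀ T)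
      (_ : (q:ℝ) ∈ Set.Icc t₀ T) (_ : |(p:ℝ) - (q:ℝ)| ≤ 1/(n+1)),
      {ω | η/2 ≤ |B p ω - B q ω|} with hE3def
    have hE3m : ∀ n, MeasurableSet (E3 n) := by
      intro n
      refine MeasurableSet.iUnion fun p => MeasurableSet.iUnion fun q =>
        MeasurableSet.iUnion fun _ => MeasurableSet.iUnion fun _ =>
        MeasurableSet.iUnion fun _ => ?_
      exact measurableSet_le measurable_const ((hBm p).sub (hBm q)).abs
    have hE3anti : Antitone E3 := by
      intro n m hnm
      refine Set.iUnion₂_subset fun p q => Set.iUnion₂_subset fun hp hq =>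
        Set.iUnion_subset fun hpq => ?_
      have h1 : (1:ℝ)/(m+1) ≤ 1/(n+1) := by
        have hcast : (n:ℝ) ≤ (m:ℝ) := by exact_mod_cast hnm
        apply div_le_div_of_nonneg_left (by norm_num) (by positivity)
        linarith
      refine Set.subset_iUnion₂_of_subset p q ?_
      refine Set.subset_iUnion₂_of_subset hp hq ?_
      exact Set.subset_iUnion_of_subset (le_trans hpq h1) (fun ω h => h)
    have hE3empty : ⋂ n, E3 n = ∅ := by
      rw [Set.eq_empty_iff_forall_notMem]
      intro ω hω
      have huc : UniformContinuousOn (fun v => B v ω) (Set.Icc t₀ T) :=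
        isCompact_Icc.uniformContinuousOn_of_continuous (hBc ω).continuousOn
      rw [Metric.uniformContinuousOn_iff] at huc
      obtain ⟨δ₀, hδ₀, hucb⟩ := huc (η/2) (by linarith)
      obtain ⟨n, hn⟩ := exists_nat_one_div_lt hδ₀
      have hωn := Set.mem_iInter.mp hω n
      rw [hE3def] at hωn
      simp only [Set.mem_iUnion, Set.mem_setOf_eq] at hωn
      obtain ⟨p, q, hp, hq, hpq, hB2⟩ := hωn
      have hd : dist (p:ℝ) (q:ℝ) < δ₀ := by
        rw [Real.dist_eq]
        calc |(p:ℝ) - q| ≤ 1/(n+1) := hpq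
          _ < δ₀ := hn
      have := hucb (p:ℝ) hp (q:ℝ) hq hd
      rw [Real.dist_eq] at this
      linarith
    have hE3lim : Tendsto (fun n => P (E3 n)) atTop (nhds 0) := by
      have := tendsto_measure_iInter_atTop (μ := P)
        (fun n => (hE3m n).nullMeasurableSet) hE3anti ⟨0, measure_ne_top P _⟩
      rw [hE3empty] at this
      simp only [measure_empty] at this
      exact this
    obtain ⟨n₃, hn₃⟩ := (hE3lim.eventually_lt_const
      (by simp [ENNReal.ofReal_pos]; linarith : (0:ℝ≥0∞) < ENNReal.ofReal (η'/3))).exists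
    -- the sup of |F| on the relevant compact
    set K : ℝ := K₁ + 2 * K₂ with hKdef
    have hKpos : 0 < K := by positivity
    obtain ⟨y₀, hy₀, hymax⟩ := isCompact_Icc.exists_isMaxOn
      (⟨0, by constructor <;> linarith⟩ : (Set.Icc (-K) K).Nonempty)
      (continuous_abs.comp hFcont).continuousOn
    set CF : ℝ := |F y₀| with hCF
    have hCF0 : 0 ≤ CF := abs_nonneg _
    set δ : ℝ := min (1/(n₃+1)) (η/(2*(CF+1))) with hδdef
    have hδpos : 0 < δ := lt_min (by positivity) (by positivity)
    refine ⟨δ, hδpos, fun r => ?_⟩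
    -- the containment
    set A1 : Set Ω := {ω | K₁ < |Y r t₀ ω|} with hA1def
    have hsubset : {ω | ∃ s ∈ Set.Icc t₀ T, ∃ u ∈ Set.Icc t₀ T,
        |u - s| ≤ δ ∧ η < |Y r u ω - Y r s ω|} ⊆ A1 ∪ (E2 n₂ ∪ E3 n₃) := by
      intro ω hω
      by_cases hA1m : ω ∈ A1
      · exact Set.mem_union_left _ hA1m
      by_cases hE2m' : ω ∈ E2 n₂
      · exact Set.mem_union_right _ (Set.mem_union_left _ hE2m')
      -- now derive ω ∈ E3 n₃
      refine Set.mem_union_right _ (Set.mem_union_right _ ?_)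
      have hY0b : |Y r t₀ ω| ≤ K₁ := by
        rw [hA1def] at hA1m
        simpa using not_lt.mp hA1m
      -- B increments bounded by K₂ on [t₀, T]
      have hBrat : ∀ q : ℚ, (q:ℝ) ∈ Set.Icc t₀ T → |B q ω - B t₀ ω| ≤ K₂ := by
        intro q hq
        by_contra hgt
        push_neg at hgt
        apply hE2m'
        rw [hE2def]
        simp only [Set.mem_iUnion, Set.mem_setOf_eq]
        exact ⟨q, hq, hgt.le⟩
      have hBbd : ∀ v ∈ Set.Icc t₀ T, |B v ω - B t₀ ω| ≤ K₂ :=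
        rat_approx_bound (continuous_abs.comp ((hBc ω).sub continuous_const))
          hBrat (by simp [hK₂0]) 
      -- crossing bound on [t₀, T]
      have hYK : ∀ u ∈ Set.Icc t₀ T, |Y r u ω| ≤ K :=
        fun u hu => by
          rw [hKdef]
          exact crossing_abs hFneg (hYcont r ω)
            (fun s u hs hsu _ => heq_of_sde B F Y hFcont hYcont hSDE r ω s u
              (le_trans ht₀.le hs) hsu)
            hBbd hY0b u hu
      obtain ⟨s, hs, u, hu, hus, hYgap⟩ := hω
      -- reduce to ordered case
      have hkey : ∀ s u, s ∈ Set.Icc t₀ T → u ∈ Set.Icc t₀ T → s < u → u - s ≤ δ →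
          η < |Y r u ω - Y r s ω| → ω ∈ E3 n₃ := by
        intro s u hs hu hsu husδ hgap
        have heqint := heq_of_sde B F Y hFcont hYcont hSDE r ω s u
          (le_trans ht₀.le hs.1) hsu.le
        have hIb : |∫ v in s..u, F (Y r v ω)| ≤ CF * |u - s| := by
          rw [← Real.norm_eq_abs]
          apply intervalIntegral.norm_integral_le_of_norm_le_const
          intro v hv
          rw [Set.uIoc_of_le hsu.le] at hv
          have hvmem : v ∈ Set.Icc t₀ T := ⟨le_trans hs.1 hv.1.le, le_trans hv.2 hu.2⟩
          have := hYK v hvmem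
          have hmem : Y r v ω ∈ Set.Icc (-K) K := abs_le.mp this
          rw [Real.norm_eq_abs]
          exact hymax hmem
        have hIb2 : |∫ v in s..u, F (Y r v ω)| < η/2 := by
          have h1 : |u - s| ≤ δ := by rw [abs_of_pos (by linarith)]; exact husδ
          have h2 : CF * |u - s| ≤ CF * (η/(2*(CF+1))) := by
            apply mul_le_mul_of_nonneg_left _ hCF0
            exact le_trans h1 (min_le_right _ _)
          have h3 : CF * (η/(2*(CF+1))) < η/2 := by
            rw [show CF * (η/(2*(CF+1))) = (CF * η) / (2*(CF+1)) by ring,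
              div_lt_iff₀ (by positivity)]
            nlinarith
          linarith [le_trans hIb h2]
        have hBgap : η/2 < |B u ω - B s ω| := by
          have h1 : |Y r u ω - Y r s ω| ≤ |∫ v in s..u, F (Y r v ω)| + |B u ω - B s ω| := by
            rw [heqint]
            exact abs_add_le _ _
          linarith
        -- pick rationals
        obtain ⟨c, hcdef, hcpos⟩ : ∃ c : ℝ, c = |B u ω - B s ω| - η/2 ∧ 0 < c :=
          ⟨_, rfl, by linarith⟩
        have hconts := (hBc ω).continuousAt (x := s)
        have hcontu := (hBc ω).continuousAt (x := u)
        rw [Metric.continuousAt_iff] at hconts hcontu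
        obtain ⟨δ₁, hδ₁, hd1⟩ := hconts (c/2) (by linarith)
        obtain ⟨δ₂, hδ₂, hd2⟩ := hcontu (c/2) (by linarith)
        obtain ⟨p, hp1, hp2⟩ := exists_rat_btwn (show s < min u (s + δ₁) by
          rw [lt_min_iff]; exact ⟨hsu, by linarith⟩)
        obtain ⟨q, hq1, hq2⟩ := exists_rat_btwn (show max s (u - δ₂) < u by
          rw [max_lt_iff]; exact ⟨hsu, by linarith⟩)
        have hpu : (p:ℝ) < u := lt_of_lt_of_le hp2 (min_le_left _ _)
        have hqs : s < (q:ℝ) := lt_of_le_of_lt (le_max_left _ _) hq1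
        have hpmem : (p:ℝ) ∈ Set.Icc t₀ T := ⟨le_trans hs.1 hp1.le, le_trans hpu.le hu.2⟩
        have hqmem : (q:ℝ) ∈ Set.Icc t₀ T := ⟨le_trans hs.1 hqs.le, le_trans hq2.le hu.2⟩
        have hBp : |B (p:ℝ) ω - B s ω| < c/2 := by
          have : dist (p:ℝ) s < δ₁ := by
            rw [Real.dist_eq, abs_of_pos (by linarith)]
            have := lt_of_lt_of_le hp2 (min_le_right u (s + δ₁))
            linarith
          have := hd1 this
          rwa [Real.dist_eq] at this
        have hBq : |B (q:ℝ) ω - B u ω| < c/2 := by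
          have : dist (q:ℝ) u < δ₂ := by
            rw [Real.dist_eq, abs_of_neg (by linarith), neg_sub]
            have := lt_of_le_of_lt (le_max_right s (u - δ₂)) hq1
            linarith
          have := hd2 this
          rwa [Real.dist_eq] at this
        have hBpq : η/2 ≤ |B (p:ℝ) ω - B (q:ℝ) ω| := by
          have htri : |B u ω - B s ω| ≤ |B (p:ℝ) ω - B (q:ℝ) ω|
              + |B (p:ℝ) ω - B s ω| + |B (q:ℝ) ω - B u ω| := by
            have hId : B u ω - B s ω = -(B (p:ℝ) ω - B (q:ℝ) ω)
                + (B (p:ℝ) ω - B s ω) + -(B (q:ℝ) ω - B u ω) := by ring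
            rw [hId]
            calc |(-(B (p:ℝ) ω - B (q:ℝ) ω) + (B (p:ℝ) ω - B s ω)) + -(B (q:ℝ) ω - B u ω)|
                ≤ |(-(B (p:ℝ) ω - B (q:ℝ) ω) + (B (p:ℝ) ω - B s ω))| + |-(B (q:ℝ) ω - B u ω)| :=
                  abs_add_le _ _
              _ ≤ |-(B (p:ℝ) ω - B (q:ℝ) ω)| + |B (p:ℝ) ω - B s ω| + |-(B (q:ℝ) ω - B u ω)| := by
                  gcongr
                  exact abs_add_le _ _
              _ = |B (p:ℝ) ω - B (q:ℝ) ω| + |B (p:ℝ) ω - B s ω| + |B (q:ℝ) ω - B u ω| := by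
                  rw [abs_neg, abs_neg]
          have : |B u ω - B s ω| = η/2 + c := by rw [hcdef]; ring
          linarith
        have hpqd : |(p:ℝ) - (q:ℝ)| ≤ 1/(n₃+1) := by
          have h1 : |(p:ℝ) - (q:ℝ)| ≤ u - s := by
            rw [abs_le]
            constructor <;> nlinarith [hpu, hqs, hp1, hq2]
          calc |(p:ℝ) - (q:ℝ)| ≤ u - s := h1
            _ ≤ δ := husδ
            _ ≤ 1/(n₃+1) := min_le_left _ _
        rw [hE3def]
        simp only [Set.mem_iUnion, Set.mem_setOf_eq]
        exact ⟨p, q, hpmem, hqmem, hpqd, hBpq⟩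
      rcases lt_trichotomy s u with hlt | heq | hgt
      · exact hkey s u hs hu hlt (by rw [abs_of_pos (by linarith)] at hus; exact hus) hYgap
      · exfalso
        rw [heq] at hYgap
        simp at hYgap
        linarith
      · refine hkey u s hu hs hgt ?_ ?_
        · rw [abs_of_neg (by linarith)] at hus; linarith
        · rw [abs_sub_comm] at hYgap; exact hYgap
    -- measure estimates
    have hint := sq_integrable P B F Y hB0 hBc hBm hBg hFcont hFneg hYcont hYmeas hSDE ht₀ r
    have hA1bd : (P A1).toReal < η'/3 := by
      have h1 := cheb P Y t₀ r hint hYmeas (hCb t₀ ht₀ r) hK₁pos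
      exact lt_of_le_of_lt h1 (div_sq_lt hc0 he3 le_rfl)
    have hE2bd : (P (E2 n₂)).toReal < η'/3 := by
      have := ENNReal.toReal_lt_toReal (measure_ne_top P _) ENNReal.ofReal_ne_top |>.mpr hn₂
      rwa [ENNReal.toReal_ofReal (by linarith)] at this
    have hE3bd : (P (E3 n₃)).toReal < η'/3 := by
      have := ENNReal.toReal_lt_toReal (measure_ne_top P _) ENNReal.ofReal_ne_top |>.mpr hn₃
      rwa [ENNReal.toReal_ofReal (by linarith)] at this
    have hm1 : P {ω | ∃ s ∈ Set.Icc t₀ T, ∃ u ∈ Set.Icc t₀ T,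
        |u - s| ≤ δ ∧ η < |Y r u ω - Y r s ω|} ≤ P A1 + (P (E2 n₂) + P (E3 n₃)) :=
      le_trans (measure_mono hsubset)
        (le_trans (measure_union_le _ _) (by gcongr; exact measure_union_le _ _))
    calc (P {ω | ∃ s ∈ Set.Icc t₀ T, ∃ u ∈ Set.Icc t₀ T,
        |u - s| ≤ δ ∧ η < |Y r u ω - Y r s ω|}).toReal
        ≤ (P A1 + (P (E2 n₂) + P (E3 n₃))).toReal := by
          apply ENNReal.toReal_mono _ hm1
          refine ENNReal.add_ne_top.mpr ⟨measure_ne_top P _, ?_⟩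
          exact ENNReal.add_ne_top.mpr ⟨measure_ne_top P _, measure_ne_top P _⟩
      _ = (P A1).toReal + ((P (E2 n₂)).toReal + (P (E3 n₃)).toReal) := by
          rw [ENNReal.toReal_add (measure_ne_top P _)
            (ENNReal.add_ne_top.mpr ⟨measure_ne_top P _, measure_ne_top P _⟩),
            ENNReal.toReal_add (measure_ne_top P _) (measure_ne_top P _)]
      _ < η'/3 + (η'/3 + η'/3) := by
          gcongr
      _ = η' := by ring
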